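/- Let t, n ∈ ℝ² be orthonormal vectors. Let η > 0, ξ ≥ 0, η̃ > 0, ξ̃ > 0 be real, and let the incident plane wave uⁱ(x) = aⁱ·exp(i·(D_i·⟪dⁱ,x⟫ + i·E_i·⟪eⁱ,x⟫)) have aⁱ ≠ 0, unit vectors dⁱ, eⁱ, constants D_i > 0, E_i ≥ 0 satisfying D_i² − E_i² = η² − ξ² and D_i·E_i·⟪dⁱ,eⁱ⟫ = η·ξ. Set Ñ := D_i·⟪dⁱ,t⟫, Ẽ := E_i·⟪eⁱ,t⟫, D_t := sqrt((η̃² − ξ̃² + Ñ² + Ẽ² + sqrt((η̃² − ξ̃² − Ñ² + Ẽ²)² + 4(ÑẼ − η̃ξ̃)²))/2), E_t := sqrt(D_t² + ξ̃² − η̃²), and let dᵗ, eᵗ ∈ ℝ² be any unit vectors with D_t·⟪dᵗ,t⟫ = Ñ, E_t·⟪eᵗ,t⟫ = Ẽ, and D_t·E_t·⟪dᵗ,eᵗ⟫ = η̃·ξ̃. Define dʳ := dⁱ − 2⟪dⁱ,n⟫·n, eʳ := eⁱ − 2⟪eⁱ,n⟫·n, γ_i := D_i·⟪dⁱ,n⟫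 + i·E_i·⟪eⁱ,n⟫, γ_t := D_t·⟪dᵗ,n⟫ + i·E_t·⟪eᵗ,n⟫; let α ∈ ℂ with γ_i + α·γ_t ≠ 0, and set aʳ := aⁱ·(γ_i − α·γ_t)/(γ_i + α·γ_t), aᵗ := 2·aⁱ·γ_i/(γ_i + α·γ_t). Define uʳ(x) = aʳ·exp(i·(D_i·⟪dʳ,x⟫ + i·E_i·⟪eʳ,x⟫)) and uᵗ(x) = aᵗ·exp(i·(D_t·⟪dᵗ,x⟫ + i·E_t·⟪eᵗ,x⟫)). Then: (i) uⁱ and uʳ satisfy Δu + (η + iξ)²·u = 0 on all of ℝ²; (ii) uᵗ satisfies Δu + (η̃ + iξ̃)²·u = 0 on all of ℝ²; (iii) for every x ∈ ℝ² with ⟪x,n⟫ = 0, uⁱ(x) + uʳ(x) = uᵗ(x) and the directional derivatives in the direction n satisfy ∂ₙuⁱ(x) + ∂ₙuʳ(x) = α·∂ₙuᵗ(x). -/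

import Mathlib

noncomputable section

open Complex

/-- The Euclidean plane ℝ². -/
abbrev V : Type := EuclideanSpace ℝ (Fin 2)

/-- A (possibly inhomogeneous) plane wave with amplitude `a`, propagation direction `d`,
decay direction `e`, and propagation/decay constants `D`, `E`:
`u(x) = a·exp(i·(D·⟪d,x⟫ + i·E·⟪e,x⟫))`. -/
noncomputable def planeWave (a : ℂ) (d e : V) (D E : ℝ) (x : V) : ℂ :=
  a * Complex.exp (Complex.I *
    ((D : ℂ) * ((inner ℝ d x : ℝ) : ℂ) + Complex.I * ((E : ℂ) * ((inner ℝ e x : ℝ) : ℂ))))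

/-- The Laplacian on ℝ² of a complex-valued function. -/
noncomputable def laplacian (u : V → ℂ) (x : V) : ℂ :=
  ∑ i : Fin 2, iteratedFDeriv ℝ 2 u x ![EuclideanSpace.single i (1 : ℝ),
    EuclideanSpace.single i (1 : ℝ)]

/-- Directional derivative of `u` at `x` in the direction `n`. -/
noncomputable def dirDeriv (u : V → ℂ) (n x : V) : ℂ := fderiv ℝ u x n

/-- The phase as a continuous linear functional. -/
noncomputable def phaseL (d e : V) (D E : ℝ) : V →L[ℝ] ℂ :=
  (Complex.I * D) • (Complex.ofRealCLM.comp (innerSL ℝ d))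
    + (-(E:ℂ)) • (Complex.ofRealCLM.comp (innerSL ℝ e))

lemma phaseL_apply (d e : V) (D E : ℝ) (x : V) :
    phaseL d e D E x = Complex.I * D * ((inner ℝ d x : ℝ):ℂ) - (E:ℂ) * ((inner ℝ e x : ℝ):ℂ) := by
  simp [phaseL]; ring

lemma planeWave_eq (a : ℂ) (d e : V) (D E : ℝ) (x : V) :
    planeWave a d e D E x = a * Complex.exp (phaseL d e D E x) := by
  rw [planeWave, phaseL_apply]
  congr 1
  congr 1
  linear_combination ((E:ℂ) * ((inner ℝ e x : ℝ):ℂ)) * Complex.I_sq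

lemma hasFDerivAt_planeWave (a : ℂ) (d e : V) (D E : ℝ) (x : V) :
    HasFDerivAt (planeWave a d e D E) ((planeWave a d e D E x) • phaseL d e D E) x := by
  have h := (((phaseL d e D E).hasFDerivAt (x := x)).cexp).const_mul a
  have : (fun y => a * Complex.exp (phaseL d e D E y)) = planeWave a d e D E := by
    funext y; rw [planeWave_eq]
  rw [this] at h
  rw [smul_smul] at h
  rw [planeWave_eq]
  exact h

lemma fderiv_planeWave (a : ℂ) (d e : V) (D E : ℝ) (x : V) :
    fderiv ℝ (planeWave a d e D E) x = (planeWave a d e D E x) • phaseL d e D E :=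
  (hasFDerivAt_planeWave a d e D E x).fderiv

lemma dirDeriv_planeWave (a : ℂ) (d e : V) (D E : ℝ) (n x : V) :
    dirDeriv (planeWave a d e D E) n x
      = planeWave a d e D E x * phaseL d e D E n := by
  rw [dirDeriv, fderiv_planeWave]
  simp

noncomputable def smulL (L : V →L[ℝ] ℂ) : ℂ →L[ℝ] (V →L[ℝ] ℂ) :=
  ((ContinuousLinearMap.id ℂ ℂ).smulRight L).restrictScalars ℝ

lemma second_deriv_planeWave (a : ℂ) (d e : V) (D E : ℝ) (x m v : V) :
    iteratedFDeriv ℝ 2 (planeWave a d e D E) x ![m, v]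
      = planeWave a d e D E x * phaseL d e D E m * phaseL d e D E v := by
  rw [iteratedFDeriv_two_apply]
  have hfd : fderiv ℝ (planeWave a d e D E)
      = fun y => smulL (phaseL d e D E) (planeWave a d e D E y) := by
    funext y; rw [fderiv_planeWave]; rfl
  rw [hfd]
  have h2 : HasFDerivAt (fun y => smulL (phaseL d e D E) (planeWave a d e D E y))
      ((smulL (phaseL d e D E)).comp ((planeWave a d e D E x) • phaseL d e D E)) x :=
    (smulL (phaseL d e D E)).hasFDerivAt.comp x (hasFDerivAt_planeWave a d e D E x)
  rw [h2.fderiv]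
  simp [smulL, smul_smul]

lemma phaseL_single (d e : V) (D E : ℝ) (i : Fin 2) :
    phaseL d e D E (EuclideanSpace.single i (1:ℝ))
      = Complex.I * D * ((d i : ℝ):ℂ) - (E:ℂ) * ((e i : ℝ):ℂ) := by
  rw [phaseL_apply]
  have h1 : (inner ℝ d (EuclideanSpace.single i (1:ℝ)) : ℝ) = d i := by
    simp [EuclideanSpace.inner_single_right]
  have h2 : (inner ℝ e (EuclideanSpace.single i (1:ℝ)) : ℝ) = e i := by
    simp [EuclideanSpace.inner_single_right]
  rw [h1, h2]

lemma helmholtz_planeWave (a : ℂ) (d e : V) (hd : ‖d‖ = 1) (he : ‖e‖ = 1)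
    (D E η ξ : ℝ) (h1 : D^2 - E^2 = η^2 - ξ^2)
    (h2 : D * E * (inner ℝ d e : ℝ) = η * ξ) (x : V) :
    laplacian (planeWave a d e D E) x
      + ((η:ℂ) + Complex.I * ξ)^2 * planeWave a d e D E x = 0 := by
  have inner_two : ∀ u v : V, (inner ℝ u v : ℝ) = u 0 * v 0 + u 1 * v 1 := by
    intro u v
    simp [PiLp.inner_apply, Fin.sum_univ_two]; ring
  have hddR : d 0 * d 0 + d 1 * d 1 = 1 := by
    have h : (inner ℝ d d : ℝ) = 1 := by
      rw [real_inner_self_eq_norm_sq, hd]; norm_num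
    rw [inner_two] at h; linarith
  have heeR : e 0 * e 0 + e 1 * e 1 = 1 := by
    have h : (inner ℝ e e : ℝ) = 1 := by
      rw [real_inner_self_eq_norm_sq, he]; norm_num
    rw [inner_two] at h; linarith
  have hdeR : d 0 * e 0 + d 1 * e 1 = (inner ℝ d e : ℝ) := (inner_two d e).symm
  have hdd : ((d 0 : ℝ):ℂ) * (d 0:ℝ) + ((d 1:ℝ):ℂ) * (d 1:ℝ) = 1 := by
    have := congrArg (fun r : ℝ => (r : ℂ)) hddR; push_cast at this; exact this
  have hee : ((e 0 : ℝ):ℂ) * (e 0:ℝ) + ((e 1:ℝ):ℂ) * (e 1:ℝ) = 1 := by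
    have := congrArg (fun r : ℝ => (r : ℂ)) heeR; push_cast at this; exact this
  have hde : ((d 0 : ℝ):ℂ) * (e 0:ℝ) + ((d 1:ℝ):ℂ) * (e 1:ℝ) = ((inner ℝ d e : ℝ):ℂ) := by
    exact_mod_cast hdeR
  have h1C : (D:ℂ)^2 - (E:ℂ)^2 = (η:ℂ)^2 - (ξ:ℂ)^2 := by exact_mod_cast h1
  have h2C : (D:ℂ) * (E:ℂ) * ((inner ℝ d e : ℝ):ℂ) = (η:ℂ) * (ξ:ℂ) := by exact_mod_cast h2
  have hsum : phaseL d e D E (EuclideanSpace.single 0 (1:ℝ))^2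
      + phaseL d e D E (EuclideanSpace.single 1 (1:ℝ))^2
      = -((η:ℂ) + Complex.I * ξ)^2 := by
    rw [phaseL_single, phaseL_single]
    linear_combination (Complex.I^2 * (D:ℂ)^2) * hdd + (E:ℂ)^2 * hee
      + (-2*Complex.I*(D:ℂ)*(E:ℂ)) * hde + (-1) * h1C + (-2*Complex.I) * h2C
      + ((D:ℂ)^2 + (ξ:ℂ)^2) * Complex.I_sq
  rw [laplacian, Fin.sum_univ_two, second_deriv_planeWave, second_deriv_planeWave]
  linear_combination (planeWave a d e D E x) * hsum

lemma inner_decomp (t n : V) (ht : ‖t‖ = 1) (hn : ‖n‖ = 1) (htn : (inner ℝ t n : ℝ) = 0)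
    (d x : V) :
    (inner ℝ d x : ℝ)
      = (inner ℝ d t : ℝ) * (inner ℝ t x : ℝ) + (inner ℝ d n : ℝ) * (inner ℝ n x : ℝ) := by
  have hon : Orthonormal ℝ ![t, n] := by
    rw [orthonormal_iff_ite]
    intro i j
    have h1 : (inner ℝ t t : ℝ) = 1 := by rw [real_inner_self_eq_norm_sq, ht]; norm_num
    have h2 : (inner ℝ n n : ℝ) = 1 := by rw [real_inner_self_eq_norm_sq, hn]; norm_num
    have h3 : (inner ℝ n t : ℝ) = 0 := by rw [real_inner_comm]; exact htn
    fin_cases i <;> fin_cases j <;>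
      simp only [Matrix.cons_val_zero, Matrix.cons_val_one, Matrix.head_cons] <;>
      simp [h1, h2, h3, htn, ht, hn]
  have hcard : Fintype.card (Fin 2) = Module.finrank ℝ V := by
    simp [finrank_euclideanSpace]
  let bb : Module.Basis (Fin 2) ℝ V := basisOfOrthonormalOfCardEqFinrank hon hcard
  have hbb : ⇑bb = ![t, n] := coe_basisOfOrthonormalOfCardEqFinrank hon hcard
  let b : OrthonormalBasis (Fin 2) ℝ V := bb.toOrthonormalBasis (by rwa [hbb])
  have hb : ⇑b = ![t, n] := by rw [Module.Basis.coe_toOrthonormalBasis, hbb]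
  have key := b.sum_inner_mul_inner d x
  rw [Fin.sum_univ_two, hb] at key
  simpa using key.symm
set_option maxHeartbeats 1000000 in
theorem GO_construction_solves_interface_problem
    (t n : V) (ht : ‖t‖ = 1) (hn : ‖n‖ = 1) (htn : (inner ℝ t n : ℝ) = 0)
    (η ξ ηt ξt : ℝ) (hη : 0 < η) (hξ : 0 ≤ ξ) (hηt : 0 < ηt) (hξt : 0 < ξt)
    (aI : ℂ) (haI : aI ≠ 0) (di ei : V) (hdi : ‖di‖ = 1) (hei : ‖ei‖ = 1)
    (Di Ei : ℝ) (hDi : 0 < Di) (hEi : 0 ≤ Ei)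
    (hHelmI1 : Di ^ 2 - Ei ^ 2 = η ^ 2 - ξ ^ 2)
    (hHelmI2 : Di * Ei * (inner ℝ di ei : ℝ) = η * ξ)
    (Nt : ℝ) (hNt : Nt = Di * (inner ℝ di t : ℝ))
    (Et' : ℝ) (hEt' : Et' = Ei * (inner ℝ ei t : ℝ))
    (Dt : ℝ)
    (hDt : Dt = Real.sqrt ((ηt ^ 2 - ξt ^ 2 + Nt ^ 2 + Et' ^ 2
      + Real.sqrt ((ηt ^ 2 - ξt ^ 2 - Nt ^ 2 + Et' ^ 2) ^ 2
        + 4 * (Nt * Et' - ηt * ξt) ^ 2)) / 2))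
    (Et : ℝ) (hEt : Et = Real.sqrt (Dt ^ 2 + ξt ^ 2 - ηt ^ 2))
    (dt et : V) (hdt : ‖dt‖ = 1) (het : ‖et‖ = 1)
    (hSnellD : Dt * (inner ℝ dt t : ℝ) = Nt)
    (hSnellE : Et * (inner ℝ et t : ℝ) = Et')
    (hHelmT : Dt * Et * (inner ℝ dt et : ℝ) = ηt * ξt)
    (dr : V) (hdr : dr = di - (2 * (inner ℝ di n : ℝ)) • n)
    (er : V) (her : er = ei - (2 * (inner ℝ ei n : ℝ)) • n)
    (γi γt : ℂ)
    (hγi : γi = (Di : ℂ) * ((inner ℝ di n : ℝ) : ℂ) + Complex.I * ((Ei : ℂ) * ((inner ℝ ei n : ℝ) : ℂ)))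
    (hγt : γt = (Dt : ℂ) * ((inner ℝ dt n : ℝ) : ℂ) + Complex.I * ((Et : ℂ) * ((inner ℝ et n : ℝ) : ℂ)))
    (α : ℂ) (hden : γi + α * γt ≠ 0)
    (aR : ℂ) (haR : aR = aI * (γi - α * γt) / (γi + α * γt))
    (aT : ℂ) (haT : aT = 2 * aI * γi / (γi + α * γt)) :
    (∀ x : V, laplacian (planeWave aI di ei Di Ei) x
        + ((η : ℂ) + Complex.I * (ξ : ℂ)) ^ 2 * planeWave aI di ei Di Ei x = 0)
      ∧ (∀ x : V, laplacian (planeWave aR dr er Di Ei) x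
          + ((η : ℂ) + Complex.I * (ξ : ℂ)) ^ 2 * planeWave aR dr er Di Ei x = 0)
      ∧ (∀ x : V, laplacian (planeWave aT dt et Dt Et) x
          + ((ηt : ℂ) + Complex.I * (ξt : ℂ)) ^ 2 * planeWave aT dt et Dt Et x = 0)
      ∧ (∀ x : V, (inner ℝ x n : ℝ) = 0 →
          planeWave aI di ei Di Ei x + planeWave aR dr er Di Ei x
              = planeWave aT dt et Dt Et x
            ∧ dirDeriv (planeWave aI di ei Di Ei) n x
                + dirDeriv (planeWave aR dr er Di Ei) n x
              = α * dirDeriv (planeWave aT dt et Dt Et) n x) := by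
  -- basic inner product facts
  have hnn : (inner ℝ n n : ℝ) = 1 := by rw [real_inner_self_eq_norm_sq, hn]; norm_num
  have hnt : (inner ℝ n t : ℝ) = 0 := by rw [real_inner_comm]; exact htn
  -- reflected direction vectors
  have hdrn : (inner ℝ dr n : ℝ) = -(inner ℝ di n : ℝ) := by
    rw [hdr, inner_sub_left, real_inner_smul_left, hnn]; ring
  have hern : (inner ℝ er n : ℝ) = -(inner ℝ ei n : ℝ) := by
    rw [her, inner_sub_left, real_inner_smul_left, hnn]; ring
  have hdrt : (inner ℝ dr t : ℝ) = (inner ℝ di t : ℝ) := by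
    rw [hdr, inner_sub_left, real_inner_smul_left, hnt]; ring
  have hert : (inner ℝ er t : ℝ) = (inner ℝ ei t : ℝ) := by
    rw [her, inner_sub_left, real_inner_smul_left, hnt]; ring
  have hdrer : (inner ℝ dr er : ℝ) = (inner ℝ di ei : ℝ) := by
    rw [hdr, her]
    simp only [inner_sub_left, inner_sub_right, real_inner_smul_left, real_inner_smul_right]
    rw [real_inner_comm n ei, hnn]
    ring
  have hdr1 : ‖dr‖ = 1 := by
    have hself : (inner ℝ dr dr : ℝ) = 1 := by
      rw [hdr]
      simp only [inner_sub_left, inner_sub_right, real_inner_smul_left, real_inner_smul_right]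
      rw [real_inner_comm n di, hnn]
      have : (inner ℝ di di : ℝ) = 1 := by rw [real_inner_self_eq_norm_sq, hdi]; norm_num
      rw [this]; ring
    have h2 : ‖dr‖^2 = 1 := by rw [← real_inner_self_eq_norm_sq, hself]
    rw [← Real.sqrt_sq (norm_nonneg dr), h2, Real.sqrt_one]
  have her1 : ‖er‖ = 1 := by
    have hself : (inner ℝ er er : ℝ) = 1 := by
      rw [her]
      simp only [inner_sub_left, inner_sub_right, real_inner_smul_left, real_inner_smul_right]
      rw [real_inner_comm n ei, hnn]
      have : (inner ℝ ei ei : ℝ) = 1 := by rw [real_inner_self_eq_norm_sq, hei]; norm_num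
      rw [this]; ring
    have h2 : ‖er‖^2 = 1 := by rw [← real_inner_self_eq_norm_sq, hself]
    rw [← Real.sqrt_sq (norm_nonneg er), h2, Real.sqrt_one]
  -- transmitted constants
  have habs : |ηt ^ 2 - ξt ^ 2 - Nt ^ 2 + Et' ^ 2|
      ≤ Real.sqrt ((ηt ^ 2 - ξt ^ 2 - Nt ^ 2 + Et' ^ 2) ^ 2 + 4 * (Nt * Et' - ηt * ξt) ^ 2) := by
    have h0 : (ηt ^ 2 - ξt ^ 2 - Nt ^ 2 + Et' ^ 2) ^ 2
        ≤ (ηt ^ 2 - ξt ^ 2 - Nt ^ 2 + Et' ^ 2) ^ 2 + 4 * (Nt * Et' - ηt * ξt) ^ 2 :=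
      le_add_of_nonneg_right (by positivity)
    have h := Real.sqrt_le_sqrt h0
    rwa [Real.sqrt_sq_eq_abs] at h
  have hRA : ηt ^ 2 - ξt ^ 2 - Nt ^ 2 + Et' ^ 2
      ≤ Real.sqrt ((ηt ^ 2 - ξt ^ 2 - Nt ^ 2 + Et' ^ 2) ^ 2 + 4 * (Nt * Et' - ηt * ξt) ^ 2) :=
    le_trans (le_abs_self _) habs
  have hRnA : -(ηt ^ 2 - ξt ^ 2 - Nt ^ 2 + Et' ^ 2)
      ≤ Real.sqrt ((ηt ^ 2 - ξt ^ 2 - Nt ^ 2 + Et' ^ 2) ^ 2 + 4 * (Nt * Et' - ηt * ξt) ^ 2) :=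
    le_trans (neg_le_abs _) habs
  have hGnn : 0 ≤ (ηt ^ 2 - ξt ^ 2 + Nt ^ 2 + Et' ^ 2
      + Real.sqrt ((ηt ^ 2 - ξt ^ 2 - Nt ^ 2 + Et' ^ 2) ^ 2
        + 4 * (Nt * Et' - ηt * ξt) ^ 2)) / 2 := by
    linarith [hRnA, sq_nonneg Nt]
  have hDt2 : Dt ^ 2 = (ηt ^ 2 - ξt ^ 2 + Nt ^ 2 + Et' ^ 2
      + Real.sqrt ((ηt ^ 2 - ξt ^ 2 - Nt ^ 2 + Et' ^ 2) ^ 2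
        + 4 * (Nt * Et' - ηt * ξt) ^ 2)) / 2 := by
    rw [hDt]; exact Real.sq_sqrt hGnn
  have hEtarg : 0 ≤ Dt ^ 2 + ξt ^ 2 - ηt ^ 2 := by
    rw [hDt2]; linarith [hRA, sq_nonneg Et']
  have hEt2 : Et ^ 2 = Dt ^ 2 + ξt ^ 2 - ηt ^ 2 := by
    rw [hEt]; exact Real.sq_sqrt hEtarg
  have hHelmT1 : Dt ^ 2 - Et ^ 2 = ηt ^ 2 - ξt ^ 2 := by linarith
  refine ⟨?_, ?_, ?_, ?_⟩
  · exact helmholtz_planeWave aI di ei hdi hei Di Ei η ξ hHelmI1 hHelmI2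
  · exact helmholtz_planeWave aR dr er hdr1 her1 Di Ei η ξ hHelmI1
      (by rw [hdrer]; exact hHelmI2)
  · exact helmholtz_planeWave aT dt et hdt het Dt Et ηt ξt hHelmT1 hHelmT
  · intro x hx
    have hnx0 : (inner ℝ n x : ℝ) = 0 := by rw [real_inner_comm]; exact hx
    set s : ℝ := (inner ℝ t x : ℝ) with hs
    have hdec : ∀ d : V, (inner ℝ d x : ℝ) = (inner ℝ d t : ℝ) * s := by
      intro d
      rw [inner_decomp t n ht hn htn d x, hnx0, mul_zero, add_zero]
    set P : ℂ := Complex.I * (Nt : ℂ) * (s : ℂ) - (Et' : ℂ) * (s : ℂ) with hP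
    have hPhaseI : phaseL di ei Di Ei x = P := by
      rw [phaseL_apply, hdec di, hdec ei, hP]
      push_cast [hNt, hEt']
      ring
    have hPhaseR : phaseL dr er Di Ei x = P := by
      rw [phaseL_apply, hdec dr, hdec er, hdrt, hert, hP]
      push_cast [hNt, hEt']
      ring
    have hPhaseT : phaseL dt et Dt Et x = P := by
      rw [phaseL_apply, hdec dt, hdec et, hP]
      have hSD : (Dt : ℂ) * ((inner ℝ dt t : ℝ) : ℂ) = (Nt : ℂ) := by exact_mod_cast hSnellD
      have hSE : (Et : ℂ) * ((inner ℝ et t : ℝ) : ℂ) = (Et' : ℂ) := by exact_mod_cast hSnellE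
      push_cast
      linear_combination (Complex.I * (s : ℂ)) * hSD + (-(s : ℂ)) * hSE
    have hUI : planeWave aI di ei Di Ei x = aI * Complex.exp P := by
      rw [planeWave_eq, hPhaseI]
    have hUR : planeWave aR dr er Di Ei x = aR * Complex.exp P := by
      rw [planeWave_eq, hPhaseR]
    have hUT : planeWave aT dt et Dt Et x = aT * Complex.exp P := by
      rw [planeWave_eq, hPhaseT]
    have hsumA : aI + aR = aT := by
      rw [haR, haT]; field_simp; ring
    constructor
    · rw [hUI, hUR, hUT]
      linear_combination (Complex.exp P) * hsumA
    · have hγiC : phaseL di ei Di Ei n = Complex.I * γi := by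
        rw [phaseL_apply, hγi]
        linear_combination (-(Ei:ℂ) * ((inner ℝ ei n : ℝ):ℂ)) * Complex.I_sq
      have hγrC : phaseL dr er Di Ei n = -(Complex.I * γi) := by
        rw [phaseL_apply, hdrn, hern, hγi]
        push_cast
        linear_combination ((Ei:ℂ) * ((inner ℝ ei n : ℝ):ℂ)) * Complex.I_sq
      have hγtC : phaseL dt et Dt Et n = Complex.I * γt := by
        rw [phaseL_apply, hγt]
        linear_combination (-(Et:ℂ) * ((inner ℝ et n : ℝ):ℂ)) * Complex.I_sq
      have hd2 : (aI - aR) * γi = α * aT * γt := by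
        rw [haR, haT]; field_simp; ring
      rw [dirDeriv_planeWave, dirDeriv_planeWave, dirDeriv_planeWave,
        hUI, hUR, hUT, hγiC, hγrC, hγtC]
      linear_combination (Complex.exp P * Complex.I) * hd2
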